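/- Let F be a non-principal ultrafilter on ℕ and p_n a sequence of pairwise distinct primes. Then the ultraproduct over F of the algebraic closures of the finite fields F_{p_n} is an algebraically closed field of characteristic zero. -/
import Mathlib

open FirstOrder Language

set_option maxHeartbeats 1000000

/-- For a non-principal ultrafilter `F` on `ℕ` and a sequence of pairwise distinct
primes `p n`, the ultraproduct of the algebraic closures of the finite fields `𝔽_{p n}` is an
algebraically closed field of characteristic zero (it models the theory `ACF 0`). -/
theorem ultraproduct_algClosure_distinct_primes_models_ACF_zero
    (F : Ultrafilter ℕ) (hF : ∀ a : ℕ, F ≠ pure a)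
    (p : ℕ → ℕ) (hp : ∀ n, (p n).Prime) (hinj : Function.Injective p) :
    letI : ∀ n, Fact (p n).Prime := fun n => ⟨hp n⟩
    letI : ∀ n, Language.ring.Structure (AlgebraicClosure (ZMod (p n))) :=
      fun n => (Ring.compatibleRingOfRing (AlgebraicClosure (ZMod (p n)))).toStructure
    (Theory.ACF 0).Model
      ((F : Filter ℕ).Product (fun n => AlgebraicClosure (ZMod (p n)))) := by
  letI : ∀ n, Fact (p n).Prime := fun n => ⟨hp n⟩
  letI : ∀ n, Ring.CompatibleRing (AlgebraicClosure (ZMod (p n))) :=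
    fun n => Ring.compatibleRingOfRing (AlgebraicClosure (ZMod (p n)))
  have hchar : ∀ n, CharP (AlgebraicClosure (ZMod (p n))) (p n) := fun n =>
    charP_of_injective_algebraMap
      (RingHom.injective (algebraMap (ZMod (p n)) (AlgebraicClosure (ZMod (p n))))) (p n)
  have hmodel : ∀ n, (Theory.ACF (p n)).Model (AlgebraicClosure (ZMod (p n))) := fun n =>
    haveI := hchar n; inferInstance
  refine Theory.model_iff _ |>.2 ?_
  intro φ hφ
  rw [Ultraproduct.sentence_realize]
  rw [Theory.ACF, Set.mem_union] at hφ
  rcases hφ with hφ | hφ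
  · rw [Theory.fieldOfChar, Set.mem_union, if_pos rfl] at hφ
    rcases hφ with hφ | hφ
    · refine Filter.Eventually.of_forall fun n => ?_
      have := hmodel n
      have hsub : φ ∈ Theory.ACF (p n) := by
        rw [Theory.ACF, Theory.fieldOfChar]
        exact Set.mem_union_left _ (Set.mem_union_left _ hφ)
      exact this.realize_of_mem φ hsub
    · obtain ⟨q, hq, rfl⟩ := hφ
      -- φ = ∼(eqZero q); true in factor n iff (q : K_n) ≠ 0 iff p n ≠ q
      have hmem : {n | p n ≠ q} ∈ F := by
        by_contra h
        have h2 : {n | p n = q} ∈ F := by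
          have := (F.compl_mem_iff_notMem).2 h
          simpa [Set.compl_setOf] using this
        have hfin : ({n | p n = q} : Set ℕ).Finite :=
          (Set.finite_singleton q).preimage hinj.injOn
        obtain ⟨x, -, hx⟩ := Ultrafilter.eq_pure_of_finite_mem hfin h2
        exact hF x hx
      refine Filter.mem_of_superset hmem fun n hn => ?_
      have := hchar n
      simp only [Sentence.Realize, Formula.realize_not, FirstOrder.Field.realize_eqZero]
      intro h0
      haveI := hchar n
      exact hn ((Nat.prime_dvd_prime_iff_eq (hp n) hq).1
        ((CharP.cast_eq_zero_iff _ (p n) q).1 h0))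
  · refine Filter.Eventually.of_forall fun n => ?_
    have := hmodel n
    have hsub : φ ∈ Theory.ACF (p n) := Set.mem_union_right _ hφ
    exact this.realize_of_mem φ hsub
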